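/- Let Sω be the group generated by σ_1, σ_2, σ_3, ... subject to the relations σ_i² = 1, σ_{i+1} σ_i σ_{i+1} = σ_i σ_{i+1} σ_i, and σ_{k+2} σ_j = σ_j σ_{k+2} for j ≤ k. If in the quotient of Sω by one additional relation σ_i = σ_j with i < j, then in this quotient σ_i = σ_j = σ_{j+1}. -/

import Mathlib

open FreeGroup in
/-- The Coxeter relations presenting the infinite symmetric group `Sω` of finitely supported
permutations of `ℕ⁺`: `σ_i² = 1`, `σ_{i+1} σ_i σ_{i+1} = σ_i σ_{i+1} σ_i`, and
`σ_{k+2} σ_j = σ_j σ_{k+2}` for `j ≤ k`. -/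
def SomegaRels : Set (FreeGroup ℕ+) :=
  {w | (∃ i : ℕ+, w = of i * of i) ∨
    (∃ i : ℕ+, w = (of (i + 1) * of i * of (i + 1)) * (of i * of (i + 1) * of i)⁻¹) ∨
    (∃ j k : ℕ+, j ≤ k ∧ w = (of (k + 2) * of j) * (of j * of (k + 2))⁻¹)}

/-- The infinite symmetric group `Sω`, presented by the Coxeter generators `σ_i`. -/
def Somega : Type := PresentedGroup SomegaRels

instance : Group Somega := by unfold Somega; infer_instance

/-- The generator `σ_i` (the transposition of `i` and `i+1`) of `Sω`. -/
def Somega.sigma (i : ℕ+) : Somega := PresentedGroup.of i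


lemma somega_rel_one {w : FreeGroup ℕ+} (hw : w ∈ SomegaRels) :
    (QuotientGroup.mk w : Somega) = 1 :=
  (QuotientGroup.eq_one_iff w).mpr (Subgroup.subset_normalClosure hw)

lemma somega_sq (i : ℕ+) : Somega.sigma i * Somega.sigma i = 1 := by
  have := somega_rel_one (Or.inl ⟨i, rfl⟩)
  exact this

lemma somega_braid (i : ℕ+) :
    Somega.sigma (i + 1) * Somega.sigma i * Somega.sigma (i + 1) =
      Somega.sigma i * Somega.sigma (i + 1) * Somega.sigma i := by
  have := somega_rel_one (Or.inr (Or.inl ⟨i, rfl⟩))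
  rw [QuotientGroup.mk_mul, QuotientGroup.mk_inv, mul_inv_eq_one] at this
  exact this

lemma somega_comm {j k : ℕ+} (hjk : j ≤ k) :
    Somega.sigma (k + 2) * Somega.sigma j = Somega.sigma j * Somega.sigma (k + 2) := by
  have := somega_rel_one (Or.inr (Or.inr ⟨j, k, hjk, rfl⟩))
  rw [QuotientGroup.mk_mul, QuotientGroup.mk_inv, mul_inv_eq_one] at this
  exact this

/-- If in a quotient `X` of `Sω` (given by a homomorphism `f`) the additional relation
`σ_i = σ_j` holds for `i < j`, then `σ_i = σ_j = σ_{j+1}` holds in `X`. -/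
theorem somega_sigma_eq_succ {X : Type*} [Group X] (f : Somega →* X)
    (i j : ℕ+) (hij : i < j) (h : f (Somega.sigma i) = f (Somega.sigma j)) :
    f (Somega.sigma i) = f (Somega.sigma (j + 1)) ∧
      f (Somega.sigma j) = f (Somega.sigma (j + 1)) := by
  obtain ⟨k, rfl⟩ := PNat.exists_eq_succ_of_ne_one (n := j) (by rintro rfl; exact PNat.not_lt_one i hij)
  have hik : i ≤ k := PNat.lt_add_one_iff.mp hij
  set a := f (Somega.sigma i) with ha
  set b := f (Somega.sigma (k + 1 + 1)) with hb
  have hcomm : b * a = a * b := by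
    have := congrArg f (somega_comm hik)
    simpa [map_mul, ← ha, ← hb, show k + 2 = k + 1 + 1 by ring] using this
  have hsa : a * a = 1 := by
    have := congrArg f (somega_sq i); simpa [map_mul, ← ha] using this
  have hsb : b * b = 1 := by
    have := congrArg f (somega_sq (k + 1 + 1)); simpa [map_mul, ← hb] using this
  have hbr : b * a * b = a * b * a := by
    have := congrArg f (somega_braid (k + 1))
    simpa [map_mul, ← hb, ← h, ← ha] using this
  have hab : a = b := by
    have h1 : b * a * b = a := by rw [hcomm, mul_assoc, hsb, mul_one]
    have h2 : a * b * a = b := by rw [← hcomm, mul_assoc, hsa, mul_one]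
    rw [h1, h2] at hbr; exact hbr
  exact ⟨hab, h ▸ hab⟩
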